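/- Let φ: [a,b] → ℝ be a probability density with invertible CDF Φ, and for j ≥ 0, m ∈ {0,...,2^j-1}, define H_{j,m}(x) = ∫_a^x h_{j,m}(Φ(y)) φ(y) dy. Then 0 ≤ H_{j,m}(x) ≤ 2^{-(1+j/2)} for all x ∈ [a,b], and ∫_a^b H_{j,m}(x) dx ≤ 2^{-(1+j/2)} [Φ^{-1}((m+1)/2^j) - Φ^{-1}(m/2^j)]. -/

import Mathlib

open MeasureTheory Set intervalIntegral
/-- the Haar function `h_{j,m}` for `j ≥ 0`, `0 ≤ m < 2^j` (extended by `0` outside `[0,1)`). -/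
noncomputable def haar (j m : ℕ) (x : ℝ) : ℝ :=
  if (m : ℝ) / 2 ^ j ≤ x ∧ x < (2 * m + 1) / 2 ^ (j + 1) then (2 : ℝ) ^ ((j : ℝ) / 2)
  else if (2 * m + 1) / 2 ^ (j + 1) ≤ x ∧ x < ((m : ℝ) + 1) / 2 ^ j then -(2 : ℝ) ^ ((j : ℝ) / 2)
  else 0

lemma haar_mul (j m : ℕ) (t z : ℝ) :
    haar j m t * z = (2 : ℝ) ^ ((j : ℝ) / 2) *
      ((if (m : ℝ) / 2 ^ j ≤ t ∧ t < (2 * (m : ℝ) + 1) / 2 ^ (j + 1) then z else 0) -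
       (if (2 * (m : ℝ) + 1) / 2 ^ (j + 1) ≤ t ∧ t < ((m : ℝ) + 1) / 2 ^ j then z else 0)) := by
  unfold haar
  split_ifs with h1 h2 <;>
    first
      | exact absurd h2.1 (not_le.mpr h1.2)
      | ring

lemma Ico_inter_Ioc_ae (a x c d : ℝ) (hac : a ≤ c) (hcd : c ≤ d) :
    (Set.Ico c d ∩ Set.Ioc a x : Set ℝ) =ᵐ[MeasureTheory.volume] Set.Ioc (min x c) (min x d) := by
  have hnull : MeasureTheory.volume ({c, d, x} : Set ℝ) = 0 :=
    (Set.toFinite _).countable.measure_zero _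
  have hae : ∀ᵐ y : ℝ, y ∉ ({c, d, x} : Set ℝ) :=
    MeasureTheory.measure_eq_zero_iff_ae_notMem.mp hnull
  filter_upwards [hae] with y hy
  simp only [Set.mem_insert_iff, Set.mem_singleton_iff, not_or] at hy
  obtain ⟨hyc, hyd, hyx⟩ := hy
  simp only [Set.mem_inter_iff, Set.mem_Ico, Set.mem_Ioc, eq_iff_iff]
  constructor
  · rintro ⟨⟨u1, u2⟩, _u3, u4⟩
    exact ⟨lt_of_le_of_lt (min_le_right x c) (lt_of_le_of_ne u1 (Ne.symm hyc)),
      le_min u4 u2.le⟩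
  · rintro ⟨v1, v2⟩
    rcases le_total c x with h | h
    · rw [min_eq_right h] at v1
      have hyd2 : y < d := lt_of_le_of_ne (le_trans v2 (min_le_right x d)) hyd
      have hyx2 : y ≤ x := le_trans v2 (min_le_left x d)
      exact ⟨⟨v1.le, hyd2⟩, lt_of_le_of_lt hac v1, hyx2⟩
    · exfalso
      rw [min_eq_left h] at v1
      rw [min_eq_left (le_trans h hcd)] at v2
      exact absurd v2 (not_le.mpr v1)

lemma indicator_piece_integral (a x c d : ℝ) (φ : ℝ → ℝ)
    (hφint : MeasureTheory.IntegrableOn φ (Set.Icc a x))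
    (hax : a ≤ x) (hac : a ≤ c) (hcd : c ≤ d) :
    ∫ y in a..x, (if c ≤ y ∧ y < d then φ y else 0) =
      (∫ y in a..min x d, φ y) - ∫ y in a..min x c, φ y := by
  have hmm : min x c ≤ min x d := min_le_min le_rfl hcd
  have haxc : a ≤ min x c := le_min hax hac
  have haxd : a ≤ min x d := le_min hax (le_trans hac hcd)
  have h1 : IntervalIntegrable φ volume a (min x c) := by
    apply MeasureTheory.IntegrableOn.intervalIntegrable
    rw [Set.uIcc_of_le haxc]
    exact hφint.mono_set (Set.Icc_subset_Icc le_rfl (min_le_left _ _))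
  have h2 : IntervalIntegrable φ volume a (min x d) := by
    apply MeasureTheory.IntegrableOn.intervalIntegrable
    rw [Set.uIcc_of_le haxd]
    exact hφint.mono_set (Set.Icc_subset_Icc le_rfl (min_le_left _ _))
  rw [intervalIntegral.integral_interval_sub_left h2 h1]
  have hfun : (fun y => if c ≤ y ∧ y < d then φ y else 0) = (Set.Ico c d).indicator φ := by
    funext y; simp [Set.indicator_apply, Set.mem_Ico]
  rw [hfun, intervalIntegral.integral_of_le hax, intervalIntegral.integral_of_le hmm]
  rw [MeasureTheory.integral_indicator measurableSet_Ico,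
    MeasureTheory.Measure.restrict_restrict measurableSet_Ico]
  exact MeasureTheory.setIntegral_congr_set (Ico_inter_Ioc_ae a x c d hac hcd)

theorem Hjm_bounds (a b : ℝ) (hab : a < b) (φ Φ Φinv : ℝ → ℝ)
    (hφ : ∀ x ∈ Set.Icc a b, 0 ≤ φ x) (hφint : MeasureTheory.IntegrableOn φ (Set.Icc a b))
    (hφnorm : ∫ y in a..b, φ y = 1)
    (hΦ : ∀ x, Φ x = ∫ y in a..x, φ y)
    (hΦmono : StrictMonoOn Φ (Set.Icc a b))
    (hinv₁ : ∀ x ∈ Set.Icc a b, Φinv (Φ x) = x)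
    (hinv₂ : ∀ y ∈ Set.Icc (0 : ℝ) 1, Φ (Φinv y) = y)
    (hinvmaps : Set.MapsTo Φinv (Set.Icc (0 : ℝ) 1) (Set.Icc a b))
    (j m : ℕ) (hm : m < 2 ^ j) :
    (∀ x ∈ Set.Icc a b,
        0 ≤ ∫ y in a..x, haar j m (Φ y) * φ y ∧
          (∫ y in a..x, haar j m (Φ y) * φ y) ≤ (2 : ℝ) ^ (-(1 + (j : ℝ) / 2))) ∧
      (∫ x in a..b, ∫ y in a..x, haar j m (Φ y) * φ y) ≤
        (2 : ℝ) ^ (-(1 + (j : ℝ) / 2)) *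
          (Φinv (((m : ℝ) + 1) / 2 ^ j) - Φinv ((m : ℝ) / 2 ^ j)) := by
  have h2j : (0:ℝ) < 2 ^ j := by positivity
  have h2j1 : (0:ℝ) < 2 ^ (j+1) := by positivity
  have hpow : (2:ℝ) ^ (j+1) = 2 * 2 ^ j := by rw [pow_succ]; ring
  have hm' : (m:ℝ) + 1 ≤ 2 ^ j := by
    have : ((m+1 : ℕ):ℝ) ≤ ((2 ^ j : ℕ):ℝ) := Nat.cast_le.mpr hm
    push_cast at this
    linarith
  have hs0 : (0:ℝ) < (2:ℝ) ^ ((j:ℝ)/2) := Real.rpow_pos_of_pos two_pos _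
  have hδs : (2:ℝ) ^ (-(1 + (j:ℝ)/2)) = (2:ℝ) ^ ((j:ℝ)/2) * ((2:ℝ) ^ (j+1))⁻¹ := by
    rw [← Real.rpow_natCast (2:ℝ) (j+1), ← Real.rpow_neg (by norm_num),
      ← Real.rpow_add (by norm_num)]
    congr 1
    push_cast
    ring
  have ht0mem : (m:ℝ)/2^j ∈ Set.Icc (0:ℝ) 1 :=
    ⟨by positivity, by rw [div_le_one h2j]; linarith⟩
  have ht1mem : (2*(m:ℝ)+1)/2^(j+1) ∈ Set.Icc (0:ℝ) 1 :=
    ⟨by positivity, by rw [div_le_one h2j1, hpow]; linarith⟩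
  have ht2mem : ((m:ℝ)+1)/2^j ∈ Set.Icc (0:ℝ) 1 :=
    ⟨by positivity, by rw [div_le_one h2j]; exact hm'⟩
  set c0 := Φinv ((m:ℝ)/2^j) with hc0def
  set c1 := Φinv ((2*(m:ℝ)+1)/2^(j+1)) with hc1def
  set c2 := Φinv (((m:ℝ)+1)/2^j) with hc2def
  have hc0 : c0 ∈ Set.Icc a b := hinvmaps ht0mem
  have hc1 : c1 ∈ Set.Icc a b := hinvmaps ht1mem
  have hc2 : c2 ∈ Set.Icc a b := hinvmaps ht2mem
  have hΦ0 : Φ c0 = (m:ℝ)/2^j := hinv₂ _ ht0mem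
  have hΦ1 : Φ c1 = (2*(m:ℝ)+1)/2^(j+1) := hinv₂ _ ht1mem
  have hΦ2 : Φ c2 = ((m:ℝ)+1)/2^j := hinv₂ _ ht2mem
  have hd10 : Φ c1 - Φ c0 = ((2:ℝ)^(j+1))⁻¹ := by
    rw [hΦ1, hΦ0, hpow]; field_simp; ring
  have hd21 : Φ c2 - Φ c1 = ((2:ℝ)^(j+1))⁻¹ := by
    rw [hΦ2, hΦ1, hpow]; field_simp; ring
  have hinvpos : (0:ℝ) < ((2:ℝ)^(j+1))⁻¹ := by positivity
  have h01 : c0 ≤ c1 := ((hΦmono.le_iff_le hc0 hc1).mp (by linarith))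
  have h12 : c1 ≤ c2 := ((hΦmono.le_iff_le hc1 hc2).mp (by linarith))
  have hmono : MonotoneOn Φ (Set.Icc a b) := hΦmono.monotoneOn
  -- key formula
  have key : ∀ x ∈ Set.Icc a b,
      (∫ y in a..x, haar j m (Φ y) * φ y) =
        (2:ℝ) ^ ((j:ℝ)/2) *
          ((Φ (min x c1) - Φ (min x c0)) - (Φ (min x c2) - Φ (min x c1))) := by
    intro x hx
    obtain ⟨hax, hxb⟩ := hx
    have husub : Set.uIcc a x ⊆ Set.Icc a b := by
      rw [Set.uIcc_of_le hax]; exact Set.Icc_subset_Icc le_rfl hxb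
    have hEq : Set.EqOn (fun y => haar j m (Φ y) * φ y)
        (fun y => (2:ℝ) ^ ((j:ℝ)/2) *
          ((if c0 ≤ y ∧ y < c1 then φ y else 0) - (if c1 ≤ y ∧ y < c2 then φ y else 0)))
        (Set.uIcc a x) := by
      intro y hy
      have hy' := husub hy
      have e1 : ((m:ℝ)/2^j ≤ Φ y ∧ Φ y < (2*(m:ℝ)+1)/2^(j+1)) ↔ (c0 ≤ y ∧ y < c1) := by
        rw [← hΦ0, ← hΦ1]
        exact and_congr (hΦmono.le_iff_le hc0 hy') (hΦmono.lt_iff_lt hy' hc1)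
      have e2 : ((2*(m:ℝ)+1)/2^(j+1) ≤ Φ y ∧ Φ y < ((m:ℝ)+1)/2^j) ↔ (c1 ≤ y ∧ y < c2) := by
        rw [← hΦ1, ← hΦ2]
        exact and_congr (hΦmono.le_iff_le hc1 hy') (hΦmono.lt_iff_lt hy' hc2)
      simp only [haar_mul, e1, e2]
    rw [intervalIntegral.integral_congr hEq, intervalIntegral.integral_const_mul]
    have hφx : MeasureTheory.IntegrableOn φ (Set.Icc a x) :=
      hφint.mono_set (Set.Icc_subset_Icc le_rfl hxb)
    have mkInt : ∀ c d : ℝ,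
        IntervalIntegrable (fun y => if c ≤ y ∧ y < d then φ y else 0) volume a x := by
      intro c d
      have hfun : (fun y => if c ≤ y ∧ y < d then φ y else 0) = (Set.Ico c d).indicator φ := by
        funext y; simp [Set.indicator_apply, Set.mem_Ico]
      rw [hfun]
      apply MeasureTheory.IntegrableOn.intervalIntegrable
      exact (hφint.indicator measurableSet_Ico).mono_set husub
    rw [intervalIntegral.integral_sub (mkInt c0 c1) (mkInt c1 c2)]
    rw [indicator_piece_integral a x c0 c1 φ hφx hax hc0.1 h01,
        indicator_piece_integral a x c1 c2 φ hφx hax hc1.1 h12]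
    rw [← hΦ (min x c1), ← hΦ (min x c0), ← hΦ (min x c2)]
  -- pointwise bounds
  have hbounds : ∀ x ∈ Set.Icc a b,
      0 ≤ (∫ y in a..x, haar j m (Φ y) * φ y) ∧
        (∫ y in a..x, haar j m (Φ y) * φ y) ≤ (2:ℝ) ^ (-(1 + (j:ℝ)/2)) := by
    intro x hx
    rw [key x hx, hδs]
    rcases le_total x c1 with h | h
    · rw [min_eq_left h, min_eq_left (le_trans h h12)]
      have hA : Φ (min x c0) ≤ Φ x := by
        apply hmono ⟨le_min hx.1 hc0.1, le_trans (min_le_left _ _) hx.2⟩ hx (min_le_left _ _)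
      have hup : Φ x - Φ (min x c0) ≤ ((2:ℝ)^(j+1))⁻¹ := by
        rcases le_total x c0 with h' | h'
        · rw [min_eq_left h']; linarith
        · rw [min_eq_right h']
          have : Φ x ≤ Φ c1 := hmono hx hc1 h
          linarith
      constructor
      · apply mul_nonneg hs0.le; linarith
      · apply mul_le_mul_of_nonneg_left _ hs0.le
        linarith
    · rw [min_eq_right h, min_eq_right (le_trans h01 h)]
      have hxc2 : min x c2 ∈ Set.Icc a b :=
        ⟨le_min hx.1 hc2.1, le_trans (min_le_left _ _) hx.2⟩
      have hD0 : Φ c1 ≤ Φ (min x c2) := hmono hc1 hxc2 (le_min h h12)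
      have hD1 : Φ (min x c2) ≤ Φ c2 := hmono hxc2 hc2 (min_le_right _ _)
      constructor
      · apply mul_nonneg hs0.le; linarith
      · apply mul_le_mul_of_nonneg_left _ hs0.le
        linarith
  refine ⟨hbounds, ?_⟩
  -- piecewise description of H
  have hz1 : ∀ x ∈ Set.Icc a c0, (∫ y in a..x, haar j m (Φ y) * φ y) = 0 := by
    intro x hx
    have hx' : x ∈ Set.Icc a b := ⟨hx.1, le_trans hx.2 hc0.2⟩
    rw [key x hx', min_eq_left (le_trans hx.2 h01),
      min_eq_left hx.2, min_eq_left (le_trans hx.2 (le_trans h01 h12))]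
    ring
  have hz2 : ∀ x ∈ Set.Icc c2 b, (∫ y in a..x, haar j m (Φ y) * φ y) = 0 := by
    intro x hx
    have hx' : x ∈ Set.Icc a b := ⟨le_trans hc2.1 hx.1, hx.2⟩
    rw [key x hx', min_eq_right (le_trans h12 hx.1),
      min_eq_right (le_trans h01 (le_trans h12 hx.1)), min_eq_right hx.1]
    have e : (Φ c1 - Φ c0) - (Φ c2 - Φ c1) = 0 := by rw [hd10, hd21]; ring
    rw [e, mul_zero]
  have hg1 : ∀ x ∈ Set.Icc c0 c1,
      (∫ y in a..x, haar j m (Φ y) * φ y) = (2:ℝ) ^ ((j:ℝ)/2) * (Φ x - Φ c0) := by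
    intro x hx
    have hx' : x ∈ Set.Icc a b := ⟨le_trans hc0.1 hx.1, le_trans hx.2 hc1.2⟩
    rw [key x hx', min_eq_left hx.2, min_eq_right hx.1, min_eq_left (le_trans hx.2 h12)]
    ring
  have hg2 : ∀ x ∈ Set.Icc c1 c2,
      (∫ y in a..x, haar j m (Φ y) * φ y) =
        (2:ℝ) ^ ((j:ℝ)/2) * (2 * Φ c1 - Φ c0 - Φ x) := by
    intro x hx
    have hx' : x ∈ Set.Icc a b := ⟨le_trans hc1.1 hx.1, le_trans hx.2 hc2.2⟩
    rw [key x hx', min_eq_right hx.1, min_eq_right (le_trans h01 hx.1), min_eq_left hx.2]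
    ring
  -- integrability of the pieces
  have int1 : IntervalIntegrable (fun x => ∫ y in a..x, haar j m (Φ y) * φ y) volume a c0 := by
    rw [intervalIntegrable_iff_integrableOn_Ioc_of_le hc0.1]
    exact MeasureTheory.integrableOn_zero.congr_fun
      (fun u hu => (hz1 u (Set.Ioc_subset_Icc_self hu)).symm) measurableSet_Ioc
  have int4 : IntervalIntegrable (fun x => ∫ y in a..x, haar j m (Φ y) * φ y) volume c2 b := by
    rw [intervalIntegrable_iff_integrableOn_Ioc_of_le hc2.2]
    exact MeasureTheory.integrableOn_zero.congr_fun
      (fun u hu => (hz2 u (Set.Ioc_subset_Icc_self hu)).symm) measurableSet_Ioc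
  have int2 : IntervalIntegrable (fun x => ∫ y in a..x, haar j m (Φ y) * φ y) volume c0 c1 := by
    have mono : MonotoneOn (fun x => (2:ℝ) ^ ((j:ℝ)/2) * (Φ x - Φ c0)) (Set.uIcc c0 c1) := by
      rw [Set.uIcc_of_le h01]
      intro u hu v hv huv
      have : Φ u ≤ Φ v := hmono ⟨le_trans hc0.1 hu.1, le_trans hu.2 hc1.2⟩
        ⟨le_trans hc0.1 hv.1, le_trans hv.2 hc1.2⟩ huv
      have := hs0.le
      nlinarith
    have hgi : IntervalIntegrable (fun x => (2:ℝ) ^ ((j:ℝ)/2) * (Φ x - Φ c0)) volume c0 c1 :=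
      mono.intervalIntegrable
    rw [intervalIntegrable_iff_integrableOn_Ioc_of_le h01] at hgi ⊢
    exact hgi.congr_fun (fun u hu => (hg1 u (Set.Ioc_subset_Icc_self hu)).symm) measurableSet_Ioc
  have int3 : IntervalIntegrable (fun x => ∫ y in a..x, haar j m (Φ y) * φ y) volume c1 c2 := by
    have anti : AntitoneOn (fun x => (2:ℝ) ^ ((j:ℝ)/2) * (2 * Φ c1 - Φ c0 - Φ x))
        (Set.uIcc c1 c2) := by
      rw [Set.uIcc_of_le h12]
      intro u hu v hv huv
      have : Φ u ≤ Φ v := hmono ⟨le_trans hc1.1 hu.1, le_trans hu.2 hc2.2⟩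
        ⟨le_trans hc1.1 hv.1, le_trans hv.2 hc2.2⟩ huv
      have := hs0.le
      simp only
      nlinarith
    have hgi : IntervalIntegrable (fun x => (2:ℝ) ^ ((j:ℝ)/2) * (2 * Φ c1 - Φ c0 - Φ x))
        volume c1 c2 := anti.intervalIntegrable
    rw [intervalIntegrable_iff_integrableOn_Ioc_of_le h12] at hgi ⊢
    exact hgi.congr_fun (fun u hu => (hg2 u (Set.Ioc_subset_Icc_self hu)).symm) measurableSet_Ioc
  have i34 : IntervalIntegrable (fun x => ∫ y in a..x, haar j m (Φ y) * φ y) volume c1 b :=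
    int3.trans int4
  have i234 : IntervalIntegrable (fun x => ∫ y in a..x, haar j m (Φ y) * φ y) volume c0 b :=
    int2.trans i34
  rw [← intervalIntegral.integral_add_adjacent_intervals int1 i234,
      ← intervalIntegral.integral_add_adjacent_intervals int2 i34,
      ← intervalIntegral.integral_add_adjacent_intervals int3 int4]
  have p1 : (∫ x in a..c0, ∫ y in a..x, haar j m (Φ y) * φ y) = 0 := by
    rw [intervalIntegral.integral_congr (g := fun _ => (0:ℝ))
      (fun u hu => hz1 u (by rwa [Set.uIcc_of_le hc0.1] at hu))]
    simp
  have p4 : (∫ x in c2..b, ∫ y in a..x, haar j m (Φ y) * φ y) = 0 := by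
    rw [intervalIntegral.integral_congr (g := fun _ => (0:ℝ))
      (fun u hu => hz2 u (by rwa [Set.uIcc_of_le hc2.2] at hu))]
    simp
  have p2 : (∫ x in c0..c1, ∫ y in a..x, haar j m (Φ y) * φ y) ≤
      (2:ℝ) ^ (-(1 + (j:ℝ)/2)) * (c1 - c0) := by
    have hb := intervalIntegral.integral_mono_on h01 int2 intervalIntegrable_const
      (fun u hu => (hbounds u (Set.Icc_subset_Icc hc0.1 hc1.2 hu)).2)
    simpa [intervalIntegral.integral_const, smul_eq_mul, mul_comm] using hb
  have p3 : (∫ x in c1..c2, ∫ y in a..x, haar j m (Φ y) * φ y) ≤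
      (2:ℝ) ^ (-(1 + (j:ℝ)/2)) * (c2 - c1) := by
    have hb := intervalIntegral.integral_mono_on h12 int3 intervalIntegrable_const
      (fun u hu => (hbounds u (Set.Icc_subset_Icc hc1.1 hc2.2 hu)).2)
    simpa [intervalIntegral.integral_const, smul_eq_mul, mul_comm] using hb
  rw [p1, p4]
  nlinarith [p2, p3]
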